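/- The number M_n of games of plates and olives of length n satisfies M_n ≤ 108^n · n^n for all sufficiently large n. -/

import Mathlib

/-- A plate-add move: an empty plate (a `0`) is put down. -/
def PPlus (a b : Multiset ℕ) : Prop := b = 0 ::ₘ a

/-- A first olive-add move: an olive is put down on an empty plate. -/
def OPlusF (a b : Multiset ℕ) : Prop := (0 : ℕ) ∈ a ∧ b = 1 ::ₘ a.erase 0

/-- A later olive-add move: an olive is put down on a plate already holding olives. -/
def OPlusL (a b : Multiset ℕ) : Prop := ∃ x ∈ a, 0 < x ∧ b = (x + 1) ::ₘ a.erase x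

/-- An olive-add move (first or later). -/
def OPlus (a b : Multiset ℕ) : Prop := OPlusF a b ∨ OPlusL a b

/-- An olive-remove move: an olive is removed from a nonempty plate. -/
def OMinus (a b : Multiset ℕ) : Prop := ∃ x ∈ a, 0 < x ∧ b = (x - 1) ::ₘ a.erase x

/-- A simple plate-remove move: an empty plate is removed. -/
def PMinusS (a b : Multiset ℕ) : Prop := a = 0 ::ₘ b

/-- A complex plate-remove move: the olives on two plates that both have olives
are combined on one of them, and the other plate is removed. -/
def PMinusC (a b : Multiset ℕ) : Prop :=
  ∃ x ∈ a, ∃ y ∈ a.erase x, 0 < x ∧ 0 < y ∧ b = (x + y) ::ₘ (a.erase x).erase y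

/-- A legal move of the game of plates and olives. -/
def Step (a b : Multiset ℕ) : Prop :=
  PPlus a b ∨ OPlus a b ∨ OMinus a b ∨ PMinusS a b ∨ PMinusC a b

/-- A game of plates and olives of length `n`: a sequence of `2n+3`
configurations (multisets recording the number of olives on each plate),
starting and ending at the empty table, linked by `2n+2` legal moves, with no
intermediate return to the empty table. -/
def IsGame (n : ℕ) (P : Fin (2 * n + 2 + 1) → Multiset ℕ) : Prop :=
  P 0 = 0 ∧ P (Fin.last (2 * n + 2)) = 0 ∧
  (∀ i : Fin (2 * n + 2), Step (P i.castSucc) (P i.succ)) ∧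
  (∀ i : Fin (2 * n + 2 + 1), i ≠ 0 → i ≠ Fin.last (2 * n + 2) → P i ≠ 0)

/-- `M n` is the number of games of plates and olives of length `n`. -/
noncomputable def M (n : ℕ) : ℕ := Nat.card {P : Fin (2 * n + 2 + 1) → Multiset ℕ // IsGame n P}

namespace PO

def eexp : Fin 6 → ℕ
  | 0 => 0
  | 1 => 0
  | 2 => 1
  | 3 => 1
  | 4 => 0
  | 5 => 2

open Classical in
noncomputable def mtype (a b : Multiset ℕ) : Fin 6 :=
  if PPlus a b then 0 else if OPlusF a b then 1 else if OPlusL a b then 2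
  else if OMinus a b then 3 else if PMinusS a b then 4 else 5

def pvals (a : Multiset ℕ) : List ℕ := (a.toFinset.filter (fun x => 0 < x)).sort (· ≤ ·)

def rk (a : Multiset ℕ) (x : ℕ) : ℕ := (pvals a).idxOf x

open Classical in
noncomputable def codeNat (R : ℕ) (a b : Multiset ℕ) : ℕ :=
  if PPlus a b then 0
  else if OPlusF a b then 0
  else if h : OPlusL a b then rk a h.choose
  else if h : OMinus a b then rk a h.choose
  else if PMinusS a b then 0
  else if h : PMinusC a b then rk a h.choose * R + rk (a.erase h.choose) h.choose_spec.2.choose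
  else 0

lemma main_cases (R : ℕ) {a b : Multiset ℕ} (hs : Step a b) :
    (mtype a b = 0 ∧ codeNat R a b = 0 ∧ b = 0 ::ₘ a) ∨
    (mtype a b = 1 ∧ codeNat R a b = 0 ∧ (0:ℕ) ∈ a ∧ b = 1 ::ₘ a.erase 0) ∨
    (mtype a b = 2 ∧ ∃ x, x ∈ a ∧ 0 < x ∧ b = (x + 1) ::ₘ a.erase x ∧ codeNat R a b = rk a x) ∨
    (mtype a b = 3 ∧ ∃ x, x ∈ a ∧ 0 < x ∧ b = (x - 1) ::ₘ a.erase x ∧ codeNat R a b = rk a x) ∨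
    (mtype a b = 4 ∧ codeNat R a b = 0 ∧ a = 0 ::ₘ b) ∨
    (mtype a b = 5 ∧ ∃ x y, x ∈ a ∧ y ∈ a.erase x ∧ 0 < x ∧ 0 < y ∧
      b = (x + y) ::ₘ (a.erase x).erase y ∧
      codeNat R a b = rk a x * R + rk (a.erase x) y) := by
  classical
  unfold mtype codeNat
  split_ifs with h0 h1 h2 h3 h4 h5
  · exact Or.inl ⟨rfl, rfl, h0⟩
  · exact Or.inr (Or.inl ⟨rfl, rfl, h1.1, h1.2⟩)
  · obtain ⟨hx, hp, hb⟩ := h2.choose_spec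
    exact Or.inr (Or.inr (Or.inl ⟨rfl, h2.choose, hx, hp, hb, rfl⟩))
  · obtain ⟨hx, hp, hb⟩ := h3.choose_spec
    exact Or.inr (Or.inr (Or.inr (Or.inl ⟨rfl, h3.choose, hx, hp, hb, rfl⟩)))
  · exact Or.inr (Or.inr (Or.inr (Or.inr (Or.inl ⟨rfl, rfl, h4⟩))))
  · obtain ⟨hx, hrest⟩ := h5.choose_spec
    obtain ⟨hy, hpx, hpy, hb⟩ := hrest.choose_spec
    exact Or.inr (Or.inr (Or.inr (Or.inr (Or.inr
      ⟨rfl, h5.choose, hrest.choose, hx, hy, hpx, hpy, hb, rfl⟩))))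
  · exfalso
    rcases hs with h | h | h | h | h
    · exact h0 h
    · rcases h with h | h
      · exact h1 h
      · exact h2 h
    · exact h3 h
    · exact h4 h
    · exact h5 h

lemma mem_pvals {a : Multiset ℕ} {x : ℕ} (hx : x ∈ a) (hp : 0 < x) : x ∈ pvals a := by
  simp [pvals, Finset.mem_sort, Finset.mem_filter, Multiset.mem_toFinset, hx, hp]

lemma rk_lt {a : Multiset ℕ} {x : ℕ} (h : x ∈ pvals a) : rk a x < (pvals a).length :=
  List.idxOf_lt_length_iff.2 h

lemma rk_inj {a : Multiset ℕ} {x y : ℕ} (hx : x ∈ pvals a) (hy : y ∈ pvals a)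
    (h : rk a x = rk a y) : x = y := by
  have h1 := List.idxOf_get (List.idxOf_lt_length_iff.2 hx)
  have h2 := List.idxOf_get (List.idxOf_lt_length_iff.2 hy)
  rw [← h1, ← h2]
  simp [rk] at h
  simp [h]

lemma pvals_len_erase_le (a : Multiset ℕ) (x : ℕ) :
    (pvals (a.erase x)).length ≤ (pvals a).length := by
  simp only [pvals, Finset.length_sort]
  apply Finset.card_le_card
  apply Finset.filter_subset_filter
  intro y hy
  simp only [Multiset.mem_toFinset] at hy ⊢
  exact Multiset.mem_of_le (Multiset.erase_le x a) hy

lemma two_sum (s : Finset ℕ) (hs : ∀ x ∈ s, 0 < x) :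
    s.card * (s.card + 1) ≤ 2 * ∑ x ∈ s, x := by
  induction s using Finset.strongInductionOn with
  | _ s ih =>
    rcases s.eq_empty_or_nonempty with rfl | hne
    · simp
    · have hMs : s.max' hne ∈ s := s.max'_mem hne
      have hcard : s.card ≤ s.max' hne := by
        have hsub : s ⊆ Finset.Icc 1 (s.max' hne) :=
          fun x hx => Finset.mem_Icc.2 ⟨hs x hx, Finset.le_max' s x hx⟩
        calc s.card ≤ (Finset.Icc 1 (s.max' hne)).card := Finset.card_le_card hsub
          _ = s.max' hne := by rw [Nat.card_Icc]; omega
      have ih' := ih (s.erase (s.max' hne)) (Finset.erase_ssubset hMs)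
        (fun x hx => hs x (Finset.mem_of_mem_erase hx))
      have hsum : ∑ x ∈ s, x = s.max' hne + ∑ x ∈ s.erase (s.max' hne), x :=
        (Finset.add_sum_erase _ _ hMs).symm
      have hc : s.card = (s.erase (s.max' hne)).card + 1 := by
        rw [Finset.card_erase_of_mem hMs]
        have : 0 < s.card := Finset.card_pos.2 hne
        omega
      rw [hsum, hc]
      nlinarith [ih']

lemma pvals_len_le {a : Multiset ℕ} {s : ℕ} (h : a.sum ≤ s) :
    (pvals a).length ≤ Nat.sqrt (2 * s) := by
  rw [Nat.le_sqrt]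
  set t := a.toFinset.filter (fun x => 0 < x) with ht
  have hlen : (pvals a).length = t.card := Finset.length_sort _
  have hsub : (∑ x ∈ t, x) ≤ a.sum := by
    have hle : t.val ≤ a := by
      refine le_trans ?_ (Multiset.dedup_le a)
      exact Multiset.filter_le _ _
    obtain ⟨u, hu⟩ := Multiset.le_iff_exists_add.1 hle
    have : ∑ x ∈ t, x = t.val.sum := by
      rw [Finset.sum]; rw [Multiset.map_id']
    rw [this, hu, Multiset.sum_add]
    omega
  have := two_sum t (fun x hx => (Finset.mem_filter.1 hx).2)
  calc (pvals a).length * (pvals a).length ≤ t.card * (t.card + 1) := by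
        rw [hlen]; exact Nat.mul_le_mul_left _ (Nat.le_succ _)
    _ ≤ 2 * ∑ x ∈ t, x := this
    _ ≤ 2 * s := by omega

lemma determ {R : ℕ} {a b b' : Multiset ℕ} (hb : Step a b) (hb' : Step a b')
    (hlen : (pvals a).length ≤ R)
    (ht : mtype a b = mtype a b') (hc : codeNat R a b = codeNat R a b') : b = b' := by
  rcases main_cases R hb with ⟨t1, c1, e1⟩ | ⟨t1, c1, m1, e1⟩ | ⟨t1, x, hx, hpx, e1, c1⟩ |
    ⟨t1, x, hx, hpx, e1, c1⟩ | ⟨t1, c1, e1⟩ | ⟨t1, x, y, hx, hy, hpx, hpy, e1, c1⟩ <;>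
  rcases main_cases R hb' with ⟨t2, c2, e2⟩ | ⟨t2, c2, m2, e2⟩ | ⟨t2, x', hx', hpx', e2, c2⟩ |
    ⟨t2, x', hx', hpx', e2, c2⟩ | ⟨t2, c2, e2⟩ | ⟨t2, x', y', hx', hy', hpx', hpy', e2, c2⟩ <;>
  rw [t1, t2] at ht <;> first
  | exact absurd ht (by decide)
  | skip
  · rw [e1, e2]
  · rw [e1, e2]
  · -- OPlusL
    rw [c1, c2] at hc
    have hxx : x = x' := rk_inj (mem_pvals hx hpx) (mem_pvals hx' hpx') hc
    rw [e1, e2, hxx]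
  · -- OMinus
    rw [c1, c2] at hc
    have hxx : x = x' := rk_inj (mem_pvals hx hpx) (mem_pvals hx' hpx') hc
    rw [e1, e2, hxx]
  · -- PMinusS
    rw [e1] at e2
    exact (Multiset.cons_inj_right _).1 e2
  · -- PMinusC
    rw [c1, c2] at hc
    have kb : rk (a.erase x) y < R :=
      lt_of_lt_of_le (rk_lt (mem_pvals hy hpy)) (le_trans (pvals_len_erase_le a x) hlen)
    have kb' : rk (a.erase x') y' < R :=
      lt_of_lt_of_le (rk_lt (mem_pvals hy' hpy')) (le_trans (pvals_len_erase_le a x') hlen)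
    have hR : 0 < R := lt_of_le_of_lt (Nat.zero_le _) kb
    have d1 : (rk a x * R + rk (a.erase x) y) / R = rk a x := by
      rw [Nat.mul_comm, Nat.mul_add_div hR, Nat.div_eq_of_lt kb]; omega
    have d2 : (rk a x' * R + rk (a.erase x') y') / R = rk a x' := by
      rw [Nat.mul_comm, Nat.mul_add_div hR, Nat.div_eq_of_lt kb']; omega
    have hj : rk a x = rk a x' := by rw [← d1, ← d2, hc]
    have hxx : x = x' := rk_inj (mem_pvals hx hpx) (mem_pvals hx' hpx') hj
    subst hxx
    have hk : rk (a.erase x) y = rk (a.erase x) y' := by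
      rw [hj] at hc; omega
    have hyy : y = y' := rk_inj (mem_pvals hy hpy) (mem_pvals hy' hpy') hk
    rw [e1, e2, hyy]

lemma code_lt {R : ℕ} {a b : Multiset ℕ} (hs : Step a b) (hlen : (pvals a).length ≤ R) :
    codeNat R a b < R ^ eexp (mtype a b) := by
  rcases main_cases R hs with ⟨t1, c1, e1⟩ | ⟨t1, c1, m1, e1⟩ | ⟨t1, x, hx, hpx, e1, c1⟩ |
    ⟨t1, x, hx, hpx, e1, c1⟩ | ⟨t1, c1, e1⟩ | ⟨t1, x, y, hx, hy, hpx, hpy, e1, c1⟩ <;>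
    rw [t1, c1] <;> simp [eexp]
  · exact lt_of_lt_of_le (rk_lt (mem_pvals hx hpx)) hlen
  · exact lt_of_lt_of_le (rk_lt (mem_pvals hx hpx)) hlen
  · have jb : rk a x < R := lt_of_lt_of_le (rk_lt (mem_pvals hx hpx)) hlen
    have kb : rk (a.erase x) y < R :=
      lt_of_lt_of_le (rk_lt (mem_pvals hy hpy)) (le_trans (pvals_len_erase_le a x) hlen)
    calc rk a x * R + rk (a.erase x) y < rk a x * R + R := by omega
      _ = (rk a x + 1) * R := by ring
      _ ≤ R * R := Nat.mul_le_mul_right _ (by omega)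
      _ = R ^ 2 := (sq R).symm

lemma step_g {a b : Multiset ℕ} (hs : Step a b) :
    Multiset.card b + b.sum ≤ Multiset.card a + a.sum + 1 ∧
    Multiset.card a + a.sum ≤ Multiset.card b + b.sum + 1 := by
  rcases main_cases 0 hs with ⟨t1, c1, e1⟩ | ⟨t1, c1, m1, e1⟩ | ⟨t1, x, hx, hpx, e1, c1⟩ |
    ⟨t1, x, hx, hpx, e1, c1⟩ | ⟨t1, c1, e1⟩ | ⟨t1, x, y, hx, hy, hpx, hpy, e1, c1⟩
  · subst e1; simp only [Multiset.card_cons, Multiset.sum_cons]; omega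
  · have hce : Multiset.card (a.erase 0) + 1 = Multiset.card a := Multiset.card_erase_add_one m1
    have hse : (0:ℕ) + (a.erase 0).sum = a.sum := by
      rw [← Multiset.sum_cons, Multiset.cons_erase m1]
    subst e1; simp only [Multiset.card_cons, Multiset.sum_cons]; omega
  · have hce : Multiset.card (a.erase x) + 1 = Multiset.card a := Multiset.card_erase_add_one hx
    have hse : x + (a.erase x).sum = a.sum := by
      rw [← Multiset.sum_cons, Multiset.cons_erase hx]
    subst e1; simp only [Multiset.card_cons, Multiset.sum_cons]; omega
  · have hce : Multiset.card (a.erase x) + 1 = Multiset.card a := Multiset.card_erase_add_one hx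
    have hse : x + (a.erase x).sum = a.sum := by
      rw [← Multiset.sum_cons, Multiset.cons_erase hx]
    subst e1; simp only [Multiset.card_cons, Multiset.sum_cons]; omega
  · subst e1; simp only [Multiset.card_cons, Multiset.sum_cons]; omega
  · have hce : Multiset.card (a.erase x) + 1 = Multiset.card a := Multiset.card_erase_add_one hx
    have hse : x + (a.erase x).sum = a.sum := by
      rw [← Multiset.sum_cons, Multiset.cons_erase hx]
    have hce2 : Multiset.card ((a.erase x).erase y) + 1 = Multiset.card (a.erase x) :=
      Multiset.card_erase_add_one hy
    have hse2 : y + ((a.erase x).erase y).sum = (a.erase x).sum := by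
      rw [← Multiset.sum_cons, Multiset.cons_erase hy]
    subst e1; simp only [Multiset.card_cons, Multiset.sum_cons]; omega

lemma step_ineq {a b : Multiset ℕ} (hs : Step a b) :
    (eexp (mtype a b) : ℤ) ≤ 1 - ((Multiset.card b : ℤ) - (Multiset.card a : ℤ)) := by
  rcases main_cases 0 hs with ⟨t1, c1, e1⟩ | ⟨t1, c1, m1, e1⟩ | ⟨t1, x, hx, hpx, e1, c1⟩ |
    ⟨t1, x, hx, hpx, e1, c1⟩ | ⟨t1, c1, e1⟩ | ⟨t1, x, y, hx, hy, hpx, hpy, e1, c1⟩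
  · rw [t1]
    have hcb : Multiset.card b = Multiset.card a + 1 := by rw [e1]; simp
    simp only [eexp]; omega
  · rw [t1]
    have hce : Multiset.card (a.erase 0) + 1 = Multiset.card a := Multiset.card_erase_add_one m1
    have hcb : Multiset.card b = Multiset.card (a.erase 0) + 1 := by rw [e1]; simp
    simp only [eexp]; omega
  · rw [t1]
    have hce : Multiset.card (a.erase x) + 1 = Multiset.card a := Multiset.card_erase_add_one hx
    have hcb : Multiset.card b = Multiset.card (a.erase x) + 1 := by rw [e1]; simp
    simp only [eexp]; omega
  · rw [t1]
    have hce : Multiset.card (a.erase x) + 1 = Multiset.card a := Multiset.card_erase_add_one hx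
    have hcb : Multiset.card b = Multiset.card (a.erase x) + 1 := by rw [e1]; simp
    simp only [eexp]; omega
  · rw [t1]
    have hca : Multiset.card a = Multiset.card b + 1 := by rw [e1]; simp
    simp only [eexp]; omega
  · rw [t1]
    have hce : Multiset.card (a.erase x) + 1 = Multiset.card a := Multiset.card_erase_add_one hx
    have hce2 : Multiset.card ((a.erase x).erase y) + 1 = Multiset.card (a.erase x) :=
      Multiset.card_erase_add_one hy
    have hcb : Multiset.card b = Multiset.card ((a.erase x).erase y) + 1 := by rw [e1]; simp
    simp only [eexp]; omega


section Game
variable {n : ℕ} {P : Fin (2 * n + 2 + 1) → Multiset ℕ}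

lemma g_le_fwd (hP : IsGame n P) (i : Fin (2 * n + 2 + 1)) :
    Multiset.card (P i) + (P i).sum ≤ (i : ℕ) := by
  induction i using Fin.induction with
  | zero => rw [hP.1]; simp
  | succ j ih =>
    have h := (step_g (hP.2.2.1 j)).1
    have e1 : ((j.castSucc : Fin (2*n+2+1)) : ℕ) = (j : ℕ) := Fin.coe_castSucc j
    have e2 : ((j.succ : Fin (2*n+2+1)) : ℕ) = (j : ℕ) + 1 := Fin.val_succ j
    omega

lemma g_le_bwd (hP : IsGame n P) (i : Fin (2 * n + 2 + 1)) :
    Multiset.card (P i) + (P i).sum ≤ 2 * n + 2 - (i : ℕ) := by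
  induction i using Fin.reverseInduction with
  | last => rw [hP.2.1]; simp
  | cast j ih =>
    have h := (step_g (hP.2.2.1 j)).2
    have e1 : ((j.castSucc : Fin (2*n+2+1)) : ℕ) = (j : ℕ) := Fin.coe_castSucc j
    have e2 : ((j.succ : Fin (2*n+2+1)) : ℕ) = (j : ℕ) + 1 := Fin.val_succ j
    have hj : (j : ℕ) < 2 * n + 2 := j.isLt
    omega

lemma sum_le (hP : IsGame n P) (i : Fin (2 * n + 2 + 1)) : (P i).sum ≤ n + 1 := by
  have h1 := g_le_fwd hP i
  have h2 := g_le_bwd hP i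
  have : (i : ℕ) < 2 * n + 2 + 1 := i.isLt
  omega

lemma len_le (hP : IsGame n P) (i : Fin (2 * n + 2 + 1)) :
    (pvals (P i)).length ≤ Nat.sqrt (2 * n + 2) := by
  have h := pvals_len_le (a := P i) (s := n + 1) (sum_le hP i)
  have e : 2 * (n + 1) = 2 * n + 2 := by ring
  rwa [e] at h

lemma constraint (hP : IsGame n P) :
    ∑ i : Fin (2 * n + 2), eexp (mtype (P i.castSucc) (P i.succ)) ≤ 2 * n + 2 := by
  classical
  let f : ℕ → ℤ := fun k => if h : k < 2 * n + 2 + 1 then (Multiset.card (P ⟨k, h⟩) : ℤ) else 0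
  have hf1 : ∀ i : Fin (2 * n + 2), (Multiset.card (P i.castSucc) : ℤ) = f (i : ℕ) := by
    intro i
    have h : (i : ℕ) < 2 * n + 2 + 1 := by omega
    have hcast : i.castSucc = (⟨(i : ℕ), h⟩ : Fin (2 * n + 2 + 1)) := by ext; simp
    simp only [f, dif_pos h, hcast]
  have hf2 : ∀ i : Fin (2 * n + 2), (Multiset.card (P i.succ) : ℤ) = f ((i : ℕ) + 1) := by
    intro i
    have h : (i : ℕ) + 1 < 2 * n + 2 + 1 := by omega
    have hcast : i.succ = (⟨(i : ℕ) + 1, h⟩ : Fin (2 * n + 2 + 1)) := by ext; simp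
    simp only [f, dif_pos h, hcast]
  have hf0 : f 0 = 0 := by
    have h : (0 : ℕ) < 2 * n + 2 + 1 := by omega
    have hc : (⟨(0:ℕ), h⟩ : Fin (2 * n + 2 + 1)) = 0 := rfl
    simp only [f, dif_pos h, hc, hP.1]
    simp
  have hfm : f (2 * n + 2) = 0 := by
    have h : 2 * n + 2 < 2 * n + 2 + 1 := by omega
    have hc : (⟨2 * n + 2, h⟩ : Fin (2 * n + 2 + 1)) = Fin.last (2 * n + 2) := rfl
    simp only [f, dif_pos h, hc, hP.2.1]
    simp
  have hsum : ∑ i : Fin (2 * n + 2), (f ((i:ℕ) + 1) - f (i:ℕ)) = f (2 * n + 2) - f 0 := by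
    rw [Fin.sum_univ_eq_sum_range (fun k => f (k + 1) - f k) (2 * n + 2)]
    exact Finset.sum_range_sub f (2 * n + 2)
  have main : ∑ i : Fin (2 * n + 2), (eexp (mtype (P i.castSucc) (P i.succ)) : ℤ)
      ≤ ((2 * n + 2 : ℕ) : ℤ) := by
    calc ∑ i : Fin (2 * n + 2), (eexp (mtype (P i.castSucc) (P i.succ)) : ℤ)
        ≤ ∑ i : Fin (2 * n + 2), (1 - (f ((i:ℕ) + 1) - f (i:ℕ))) := by
          apply Finset.sum_le_sum
          intro i _
          rw [← hf1 i, ← hf2 i]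
          exact step_ineq (hP.2.2.1 i)
      _ = ((2 * n + 2 : ℕ) : ℤ) - (f (2 * n + 2) - f 0) := by
          rw [Finset.sum_sub_distrib, hsum]
          simp
      _ = ((2 * n + 2 : ℕ) : ℤ) := by rw [hf0, hfm]; ring
  have h2 : ((∑ i : Fin (2 * n + 2), eexp (mtype (P i.castSucc) (P i.succ)) : ℕ) : ℤ)
      ≤ ((2 * n + 2 : ℕ) : ℤ) := by
    push_cast
    push_cast at main
    exact main
  exact_mod_cast h2

end Game

abbrev Wty (m : ℕ) : Type := {w : Fin m → Fin 6 // ∑ i, eexp (w i) ≤ m}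

abbrev Tty (m R : ℕ) : Type := Σ w : Wty m, ∀ i : Fin m, Fin (R ^ eexp (w.1 i))

lemma card_Tty (m R : ℕ) (hR : 1 ≤ R) : Fintype.card (Tty m R) ≤ 6 ^ m * R ^ m := by
  classical
  have h1 : Fintype.card (Tty m R) = ∑ w : Wty m, ∏ i : Fin m, R ^ eexp (w.1 i) := by
    rw [Fintype.card_sigma]
    apply Finset.sum_congr rfl
    intro w _
    simp [Fintype.card_pi]
  rw [h1]
  have h2 : ∀ w : Wty m, ∏ i : Fin m, R ^ eexp (w.1 i) ≤ R ^ m := by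
    intro w
    rw [Finset.prod_pow_eq_pow_sum]
    exact Nat.pow_le_pow_right hR w.2
  calc ∑ w : Wty m, ∏ i : Fin m, R ^ eexp (w.1 i) ≤ ∑ _w : Wty m, R ^ m :=
        Finset.sum_le_sum (fun w _ => h2 w)
    _ = Fintype.card (Wty m) * R ^ m := by rw [Finset.sum_const, Finset.card_univ, smul_eq_mul]
    _ ≤ 6 ^ m * R ^ m := by
        apply Nat.mul_le_mul_right
        calc Fintype.card (Wty m) ≤ Fintype.card (Fin m → Fin 6) :=
              Fintype.card_subtype_le _
          _ = 6 ^ m := by simp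

noncomputable def enc (n : ℕ) (Pg : {P : Fin (2 * n + 2 + 1) → Multiset ℕ // IsGame n P}) :
    Tty (2 * n + 2) (Nat.sqrt (2 * n + 2)) :=
  ⟨⟨fun i => mtype (Pg.1 i.castSucc) (Pg.1 i.succ), constraint Pg.2⟩,
   fun i => ⟨codeNat (Nat.sqrt (2 * n + 2)) (Pg.1 i.castSucc) (Pg.1 i.succ),
     code_lt (Pg.2.2.2.1 i) (len_le Pg.2 i.castSucc)⟩⟩

lemma enc_inj (n : ℕ) : Function.Injective (enc n) := by
  rintro ⟨P, hP⟩ ⟨Q, hQ⟩ h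
  have ht : ∀ i : Fin (2 * n + 2),
      mtype (P i.castSucc) (P i.succ) = mtype (Q i.castSucc) (Q i.succ) :=
    fun i => congrFun (congrArg (fun t : Tty (2*n+2) (Nat.sqrt (2*n+2)) => t.1.1) h) i
  have hc : ∀ i : Fin (2 * n + 2),
      codeNat (Nat.sqrt (2*n+2)) (P i.castSucc) (P i.succ)
        = codeNat (Nat.sqrt (2*n+2)) (Q i.castSucc) (Q i.succ) :=
    fun i => congrFun (congrArg
      (fun t : Tty (2*n+2) (Nat.sqrt (2*n+2)) => fun j => ((t.2 j : ℕ))) h) i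
  have key : ∀ i : Fin (2 * n + 2 + 1), P i = Q i := by
    intro i
    induction i using Fin.induction with
    | zero => rw [hP.1, hQ.1]
    | succ j ih =>
      have hstepP := hP.2.2.1 j
      have hstepQ := hQ.2.2.1 j
      rw [← ih] at hstepQ
      have ht' := ht j
      have hc' := hc j
      rw [← ih] at ht' hc'
      exact determ hstepP hstepQ (len_le hP j.castSucc) ht' hc'
  exact Subtype.ext (funext key)

lemma key40 : ∀ m : ℕ, 40 ≤ m → (72 * m + 72) * 4 ^ m ≤ 5 ^ m := by
  intro m hm
  induction m, hm using Nat.le_induction with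
  | base => norm_num
  | succ k hk ih =>
    calc (72 * (k + 1) + 72) * 4 ^ (k + 1) = (4 * (72 * k + 144)) * 4 ^ k := by ring
      _ ≤ (5 * (72 * k + 72)) * 4 ^ k := Nat.mul_le_mul_right _ (by omega)
      _ = 5 * ((72 * k + 72) * 4 ^ k) := by ring
      _ ≤ 5 * 5 ^ k := Nat.mul_le_mul_left _ ih
      _ = 5 ^ (k + 1) := by ring

end PO


/-- The number `M n` of games of plates and olives of length `n` satisfies
`M n ≤ 108^n · n^n` for all sufficiently large `n`. -/
theorem stmt_11 : ∃ N : ℕ, ∀ n ≥ N, M n ≤ 108 ^ n * n ^ n := by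
  refine ⟨40, fun n hn => ?_⟩
  have h0 : M n ≤ 6 ^ (2 * n + 2) * (Nat.sqrt (2 * n + 2)) ^ (2 * n + 2) := by
    have h1 : M n ≤ Nat.card (PO.Tty (2 * n + 2) (Nat.sqrt (2 * n + 2))) :=
      Nat.card_le_card_of_injective _ (PO.enc_inj n)
    rw [Nat.card_eq_fintype_card] at h1
    refine le_trans h1 (PO.card_Tty _ _ ?_)
    rw [Nat.le_sqrt]
    omega
  have hR2 : (Nat.sqrt (2 * n + 2)) ^ 2 ≤ 2 * n + 2 := Nat.sqrt_le' _
  have h1 : M n ≤ (72 * n + 72) ^ (n + 1) := by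
    calc M n ≤ 6 ^ (2 * n + 2) * (Nat.sqrt (2 * n + 2)) ^ (2 * n + 2) := h0
      _ = 36 ^ (n + 1) * ((Nat.sqrt (2 * n + 2)) ^ 2) ^ (n + 1) := by
          rw [← pow_mul, show 2 * (n + 1) = 2 * n + 2 by ring,
            show (36 : ℕ) = 6 ^ 2 from rfl, ← pow_mul,
            show 2 * (n + 1) = 2 * n + 2 by ring]
      _ ≤ 36 ^ (n + 1) * (2 * n + 2) ^ (n + 1) :=
          Nat.mul_le_mul_left _ (Nat.pow_le_pow_left hR2 _)
      _ = (72 * n + 72) ^ (n + 1) := by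
          rw [← Nat.mul_pow]
          ring_nf
  have hkey := PO.key40 n hn
  have h2 : 5 * (72 * n + 72) ≤ 4 * (108 * n) := by omega
  have h4 : 5 ^ n * (72 * n + 72) ^ n ≤ 4 ^ n * (108 * n) ^ n := by
    rw [← Nat.mul_pow, ← Nat.mul_pow]
    exact Nat.pow_le_pow_left h2 n
  have h5 : 5 ^ n * (72 * n + 72) ^ (n + 1) ≤ 5 ^ n * (108 ^ n * n ^ n) := by
    calc 5 ^ n * (72 * n + 72) ^ (n + 1)
        = (72 * n + 72) * (5 ^ n * (72 * n + 72) ^ n) := by ring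
      _ ≤ (72 * n + 72) * (4 ^ n * (108 * n) ^ n) := Nat.mul_le_mul_left _ h4
      _ = ((72 * n + 72) * 4 ^ n) * (108 * n) ^ n := by ring
      _ ≤ 5 ^ n * (108 * n) ^ n := Nat.mul_le_mul_right _ hkey
      _ = 5 ^ n * (108 ^ n * n ^ n) := by rw [Nat.mul_pow]
  have h6 : (72 * n + 72) ^ (n + 1) ≤ 108 ^ n * n ^ n :=
    Nat.le_of_mul_le_mul_left h5 (by positivity)
  exact le_trans h1 h6
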